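/- For z, w in the open unit disk, ∫_{-π}^{π} s(z,t) · conj(s(w,t)) dt/(2π) = 1/(1 - z·conj(w)), i.e., the Szegő kernel boundary integral reproduces the Szegő kernel of the disk. -/

import Mathlib

open Complex Real

theorem szego_boundary_integral (z w : ℂ) (hz : ‖z‖ < 1)
    (hw : ‖w‖ < 1) :
    (∫ t in (-π)..π,
        (1 - z * Complex.exp (-(t : ℂ) * Complex.I))⁻¹ *
          (starRingEnd ℂ) ((1 - w * Complex.exp (-(t : ℂ) * Complex.I))⁻¹))
        / (2 * (π : ℂ)) =
      (1 - z * (starRingEnd ℂ) w)⁻¹ := by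
  set b : ℂ := (starRingEnd ℂ) w with hbdef
  have hb : ‖b‖ < 1 := by
    simp only [hbdef, Complex.norm_conj]; exact hw
  -- the function on the circle
  set g : ℂ → ℂ := fun ζ => (1 - b * ζ)⁻¹ with hg
  have hden : ∀ ζ : ℂ, ‖ζ‖ ≤ 1 → 1 - b * ζ ≠ 0 := by
    intro ζ hζ h
    have : ‖b * ζ‖ < 1 := by
      rw [norm_mul]
      calc ‖b‖ * ‖ζ‖ ≤ ‖b‖ * 1 := by
            exact mul_le_mul_of_nonneg_left hζ (norm_nonneg _)
        _ < 1 := by simpa using hb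
    have hbz : (1:ℂ) = b * ζ := sub_eq_zero.mp h
    rw [← hbz] at this; simp at this
  have hgdc : DiffContOnCl ℂ g (Metric.ball (0:ℂ) 1) := by
    have hsub : Metric.closedBall (0:ℂ) 1 ⊆ {ζ | 1 - b * ζ ≠ 0} := by
      intro ζ hζ
      exact hden ζ (by simpa [Complex.dist_eq] using Metric.mem_closedBall.mp hζ)
    have hdiff : DifferentiableOn ℂ g {ζ | 1 - b * ζ ≠ 0} := by
      intro ζ hζ
      exact ((differentiableAt_const (1:ℂ)).sub ((differentiableAt_const b).mul
        differentiableAt_id)).inv hζ |>.differentiableWithinAt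
    exact DiffContOnCl.mk (hdiff.mono (Metric.ball_subset_closedBall.trans hsub))
      ((hdiff.mono (subset_trans (by rw [closure_ball (0:ℂ) one_ne_zero]) hsub)).continuousOn)
  have hzmem : z ∈ Metric.ball (0:ℂ) 1 := by simpa [Complex.dist_eq] using hz
  have key : (∮ ζ in C(0, 1), (ζ - z)⁻¹ • g ζ) = (2 * π * I : ℂ) • g z :=
    hgdc.circleIntegral_sub_inv_smul hzmem
  -- rewrite the circle integral as an interval integral
  have hne2 : ∀ t : ℝ, Complex.exp (t * I) - z ≠ 0 := by
    intro t h
    have : ‖Complex.exp (t * I)‖ = 1 := by simpa using Complex.norm_exp_ofReal_mul_I t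
    rw [sub_eq_zero] at h
    rw [h] at this
    exact absurd this (ne_of_lt hz)
  have hne3 : ∀ t : ℝ, 1 - b * Complex.exp (t * I) ≠ 0 := fun t =>
    hden _ (le_of_eq (by simpa using Complex.norm_exp_ofReal_mul_I t))
  set f : ℝ → ℂ := fun t => Complex.exp (t * I) *
      ((Complex.exp (t * I) - z)⁻¹ * (1 - b * Complex.exp (t * I))⁻¹) with hf
  have hcirc : (∮ ζ in C(0, 1), (ζ - z)⁻¹ • g ζ) = I * ∫ t in (0:ℝ)..2 * π, f t := by
    rw [circleIntegral, ← intervalIntegral.integral_const_mul]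
    refine intervalIntegral.integral_congr fun t _ => ?_
    simp only [deriv_circleMap, circleMap, hg, smul_eq_mul, zero_add, ofReal_one, one_mul, hf]
    ring
  -- the original integrand equals f
  have heq : ∀ t : ℝ, (1 - z * Complex.exp (-(t : ℂ) * I))⁻¹ *
      (starRingEnd ℂ) ((1 - w * Complex.exp (-(t : ℂ) * I))⁻¹) = f t := by
    intro t
    have hconj : (starRingEnd ℂ) ((1 - w * Complex.exp (-(t : ℂ) * I))⁻¹)
        = (1 - b * Complex.exp ((t : ℂ) * I))⁻¹ := by
      rw [map_inv₀, map_sub, map_one, map_mul, ← Complex.exp_conj]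
      congr 2
      simp [Complex.conj_I, Complex.conj_ofReal, hbdef]
    rw [hconj]
    have he : Complex.exp (-(t:ℂ) * I) = (Complex.exp ((t:ℂ) * I))⁻¹ := by
      rw [← Complex.exp_neg]; ring_nf
    rw [he, hf]
    have hexp := Complex.exp_ne_zero ((t:ℂ) * I)
    field_simp
  -- periodicity
  have hper : Function.Periodic f (2 * π) := by
    intro t
    simp only [hf]
    have : Complex.exp (((t + 2 * π : ℝ) : ℂ) * I) = Complex.exp ((t : ℝ) * I) := by
      push_cast
      rw [add_mul, Complex.exp_add, Complex.exp_two_pi_mul_I, mul_one]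
    rw [this]
  have hshift : (∫ t in (-π)..π, f t) = ∫ t in (0:ℝ)..2 * π, f t := by
    have := hper.intervalIntegral_add_eq (-π) 0
    simpa [(by ring : -π + 2 * π = π), zero_add] using this
  have hI : (∫ t in (-π)..π,
      (1 - z * Complex.exp (-(t : ℂ) * I))⁻¹ *
        (starRingEnd ℂ) ((1 - w * Complex.exp (-(t : ℂ) * I))⁻¹)) = 2 * π * g z := by
    rw [intervalIntegral.integral_congr (fun t _ => heq t), hshift]
    have : I * ∫ t in (0:ℝ)..2 * π, f t = 2 * π * I * g z := by
      rw [← hcirc, key]; simp [smul_eq_mul]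
    exact mul_left_cancel₀ Complex.I_ne_zero (this.trans (by ring))
  rw [hI]
  have hπ : (π : ℂ) ≠ 0 := by exact_mod_cast Real.pi_ne_zero
  rw [hg]
  have h1 : 1 - b * z ≠ 0 := hden z (le_of_lt hz)
  field_simp
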